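/- The removal modality distributes over disjunction in its first argument: for every model M and point s, M, s ⊨ ⟨-(φ₁ ∨ φ₂)⟩ψ if and only if M, s ⊨ ⟨-φ₁⟩ψ ∨ ⟨-φ₂⟩ψ. -/
import Mathlib


/-- MLSR syntax: atoms, ⊤, ¬, ∨, ◇, and the removal modality ⟨-φ⟩ψ. -/
inductive Form : Type where
  | atom : ℕ → Form
  | top : Form
  | neg : Form → Form
  | or : Form → Form → Form
  | dia : Form → Form
  | rem : Form → Form → Form

/-- A relational model. -/
structure Model (W : Type) where
  R : W → W → Prop
  V : ℕ → W → Prop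

/-- Truth relative to a current domain `D ⊆ W` (submodel semantics);
`M - {t}` is represented by shrinking the domain to `D \ {t}`. -/
def Sat {W : Type} (M : Model W) : Form → Set W → W → Prop
  | .atom p, _, s => M.V p s
  | .top, _, _ => True
  | .neg φ, D, s => ¬ Sat M φ D s
  | .or φ ψ, D, s => Sat M φ D s ∨ Sat M ψ D s
  | .dia φ, D, s => ∃ t ∈ D, M.R s t ∧ Sat M φ D t
  | .rem φ ψ, D, s => ∃ t ∈ D, t ≠ s ∧ Sat M φ D t ∧ Sat M ψ (D \ {t}) s

/-- The removal modality distributes over disjunction in its first argument: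
⟨-(φ₁ ∨ φ₂)⟩ψ ↔ ⟨-φ₁⟩ψ ∨ ⟨-φ₂⟩ψ, in every model (submodel) and at every point. -/
theorem stmt1 {W : Type} (M : Model W) (D : Set W) (s : W) (φ₁ φ₂ ψ : Form) :
    Sat M (.rem (.or φ₁ φ₂) ψ) D s ↔
      (Sat M (.rem φ₁ ψ) D s ∨ Sat M (.rem φ₂ ψ) D s) := by
  constructor
  · rintro ⟨t, ht, hne, h | h, hψ⟩
    · exact Or.inl ⟨t, ht, hne, h, hψ⟩
    · exact Or.inr ⟨t, ht, hne, h, hψ⟩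
  · rintro (⟨t, ht, hne, h, hψ⟩ | ⟨t, ht, hne, h, hψ⟩)
    · exact ⟨t, ht, hne, Or.inl h, hψ⟩
    · exact ⟨t, ht, hne, Or.inr h, hψ⟩
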